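/- Every connected graph with an even number of edges admits a partition of its edge set into pairs of adjacent edges (i.e., pairs sharing a common vertex). -/

import Mathlib

open Finset

set_option linter.unusedSectionVars false
set_option linter.unusedVariables false

namespace Kotzig

variable {V : Type*} [DecidableEq V]

def Adj2 (e f : Sym2 V) : Prop := ∃ v, v ∈ e ∧ v ∈ f

theorem Adj2.symm' {e f : Sym2 V} (h : Adj2 e f) : Adj2 f e := by
  obtain ⟨v, h1, h2⟩ := h; exact ⟨v, h2, h1⟩

def Step (C : Finset (Sym2 V)) (e f : Sym2 V) : Prop := e ∈ C ∧ f ∈ C ∧ Adj2 e f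

def Reach (C : Finset (Sym2 V)) : Sym2 V → Sym2 V → Prop := Relation.ReflTransGen (Step C)

theorem reach_refl {C : Finset (Sym2 V)} {e : Sym2 V} : Reach C e e := Relation.ReflTransGen.refl

theorem reach_symm {C : Finset (Sym2 V)} {e f : Sym2 V} (h : Reach C e f) : Reach C f e :=
  haveI : Std.Symm (Step C) := ⟨fun _ _ h => ⟨h.2.1, h.1, h.2.2.symm'⟩⟩
  (Relation.ReflTransGen.stdSymm (r := Step C)).symm _ _ h

theorem reach_trans {C : Finset (Sym2 V)} {e f g : Sym2 V} (h : Reach C e f) (h' : Reach C f g) :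
    Reach C e g := Relation.ReflTransGen.trans h h'

theorem reach_mono {C C' : Finset (Sym2 V)} (h : C ⊆ C') {e f : Sym2 V} (hr : Reach C e f) :
    Reach C' e f := by
  induction hr with
  | refl => exact .refl
  | tail _ hstep ih => exact ih.tail ⟨h hstep.1, h hstep.2.1, hstep.2.2⟩

theorem reach_mem {C : Finset (Sym2 V)} {e f : Sym2 V} (he : e ∈ C) (h : Reach C e f) : f ∈ C := by
  induction h with
  | refl => exact he
  | tail _ hstep _ => exact hstep.2.1

theorem reach_eq_of_not_mem {C : Finset (Sym2 V)} {u z : Sym2 V} (h : Reach C u z) (hu : u ∉ C) :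
    u = z := by
  rcases h.cases_head with h | ⟨c, hc, _⟩
  · exact h
  · exact absurd hc.1 hu

noncomputable def comp (C : Finset (Sym2 V)) (e : Sym2 V) : Finset (Sym2 V) :=
  @Finset.filter _ (fun f => Reach C e f) (Classical.decPred _) C

theorem mem_comp {C : Finset (Sym2 V)} {e f : Sym2 V} : f ∈ comp C e ↔ f ∈ C ∧ Reach C e f := by
  rw [comp]; exact @Finset.mem_filter _ _ (Classical.decPred _) _ _

theorem comp_subset {C : Finset (Sym2 V)} (e : Sym2 V) : comp C e ⊆ C :=
  fun _ hf => (mem_comp.1 hf).1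

theorem mem_comp_self {C : Finset (Sym2 V)} {e : Sym2 V} (he : e ∈ C) : e ∈ comp C e :=
  mem_comp.2 ⟨he, reach_refl⟩

theorem comp_eq_of_mem {C : Finset (Sym2 V)} {e f : Sym2 V} (h : f ∈ comp C e) :
    comp C e = comp C f := by
  obtain ⟨hfC, hr⟩ := mem_comp.1 h
  ext w
  simp only [mem_comp]
  constructor
  · rintro ⟨h1, h2⟩; exact ⟨h1, reach_trans (reach_symm hr) h2⟩
  · rintro ⟨h1, h2⟩; exact ⟨h1, reach_trans hr h2⟩

theorem not_mem_comp_of_not_reach {C : Finset (Sym2 V)} {e f w : Sym2 V}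
    (hw : w ∈ comp C e) (h : ¬ Reach C f e) : w ∉ comp C f := by
  intro hwf
  obtain ⟨_, h1⟩ := mem_comp.1 hw
  obtain ⟨_, h2⟩ := mem_comp.1 hwf
  exact h (reach_trans h2 (reach_symm h1))

theorem reach_in_comp {C : Finset (Sym2 V)} {e f : Sym2 V} (he : e ∈ C) (h : Reach C e f) :
    Reach (comp C e) e f := by
  induction h with
  | refl => exact .refl
  | @tail b c hr hstep ih =>
      exact Relation.ReflTransGen.tail ih
        ⟨mem_comp.2 ⟨hstep.1, hr⟩,
         mem_comp.2 ⟨hstep.2.1, Relation.ReflTransGen.tail hr hstep⟩, hstep.2.2⟩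

def Conn (K : Finset (Sym2 V)) : Prop := ∀ e ∈ K, ∀ f ∈ K, Reach K e f

theorem conn_comp {C : Finset (Sym2 V)} {e : Sym2 V} (he : e ∈ C) : Conn (comp C e) := by
  intro a ha b hb
  obtain ⟨_, hra⟩ := mem_comp.1 ha
  obtain ⟨_, hrb⟩ := mem_comp.1 hb
  exact reach_trans (reach_symm (reach_in_comp he hra)) (reach_in_comp he hrb)

theorem comp_eq_self_of_conn {K : Finset (Sym2 V)} (hK : Conn K) {e : Sym2 V} (he : e ∈ K) :
    comp K e = K := by
  ext w
  simp only [mem_comp]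
  exact ⟨fun h => h.1, fun h => ⟨h, hK e he w h⟩⟩

theorem reach_erase {C : Finset (Sym2 V)} {y f w : Sym2 V} (hy : y ∈ C) (hf : f ∉ comp C y)
    (h : Reach C y w) : Reach (C.erase f) y w := by
  induction h with
  | refl => exact .refl
  | @tail b c hr hstep ih =>
      have hb : b ∈ comp C y := mem_comp.2 ⟨hstep.1, hr⟩
      have hc : c ∈ comp C y := mem_comp.2 ⟨hstep.2.1, Relation.ReflTransGen.tail hr hstep⟩
      exact Relation.ReflTransGen.tail ih
        ⟨Finset.mem_erase.2 ⟨fun h' => hf (h' ▸ hb), hstep.1⟩,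
         Finset.mem_erase.2 ⟨fun h' => hf (h' ▸ hc), hstep.2.1⟩, hstep.2.2⟩

theorem comp_erase_eq {C : Finset (Sym2 V)} {y f : Sym2 V} (hy : y ∈ C) (hf : f ∉ comp C y) :
    comp (C.erase f) y = comp C y := by
  ext w
  simp only [mem_comp]
  constructor
  · rintro ⟨hw, hr⟩
    exact ⟨Finset.mem_of_mem_erase hw, reach_mono (Finset.erase_subset _ _) hr⟩
  · rintro ⟨hw, hr⟩
    refine ⟨Finset.mem_erase.2 ⟨?_, hw⟩, reach_erase hy hf hr⟩
    rintro rfl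
    exact hf (mem_comp.2 ⟨hw, hr⟩)

/-- Two-level component lemma: within a component, further surgery localizes. -/
theorem comp_inter_eq {C D : Finset (Sym2 V)} (hD : D ⊆ C) {z y : Sym2 V}
    (hy : y ∈ comp C z) (hyD : y ∈ D) : comp D y = comp (comp C z ∩ D) y := by
  have key : ∀ u, Reach D y u → Reach (comp C z ∩ D) y u ∧ u ∈ comp C z := by
    intro u hu
    induction hu with
    | refl => exact ⟨.refl, hy⟩
    | @tail b c hr hstep ih =>
        obtain ⟨ih1, ih2⟩ := ih
        have hc' : c ∈ comp C z := by
          have hzb : Reach C z b := (mem_comp.1 ih2).2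
          exact mem_comp.2 ⟨hD hstep.2.1,
            Relation.ReflTransGen.tail hzb ⟨hD hstep.1, hD hstep.2.1, hstep.2.2⟩⟩
        exact ⟨Relation.ReflTransGen.tail ih1
          ⟨Finset.mem_inter.2 ⟨ih2, hstep.1⟩, Finset.mem_inter.2 ⟨hc', hstep.2.1⟩, hstep.2.2⟩, hc'⟩
  ext w
  simp only [mem_comp, Finset.mem_inter]
  constructor
  · rintro ⟨hwD, hr⟩
    obtain ⟨h1, h2⟩ := key w hr
    exact ⟨⟨mem_comp.1 h2, hwD⟩, h1⟩
  · rintro ⟨⟨hw1, hw2⟩, hr⟩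
    exact ⟨hw2, reach_mono Finset.inter_subset_right hr⟩

theorem escape {C : Finset (Sym2 V)} {f₁ u z : Sym2 V} (h : Reach C u z) (hz : z ≠ f₁) :
    Reach (C.erase f₁) u z ∨ ∃ a, a ∈ C.erase f₁ ∧ Adj2 f₁ a ∧ Reach (C.erase f₁) a z := by
  induction h using Relation.ReflTransGen.head_induction_on with
  | refl => exact Or.inl .refl
  | @head a c hstep hrest ih =>
    rcases ih with hr | hright
    · by_cases hc : c = f₁
      · subst hc
        have := reach_eq_of_not_mem hr (Finset.notMem_erase _ _)
        exact absurd this.symm hz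
      · by_cases ha : a = f₁
        · subst ha
          exact Or.inr ⟨c, Finset.mem_erase.2 ⟨hc, hstep.2.1⟩, hstep.2.2, hr⟩
        · exact Or.inl (Relation.ReflTransGen.head
            ⟨Finset.mem_erase.2 ⟨ha, hstep.1⟩, Finset.mem_erase.2 ⟨hc, hstep.2.1⟩, hstep.2.2⟩ hr)
    · exact Or.inr hright

/-- Removing one edge from a connected set leaves at most two components. -/
theorem reach_two {K : Finset (Sym2 V)} (hK : Conn K) {g : Sym2 V} (hg : g ∈ K)
    {y₁ y₂ y₃ : Sym2 V} (h₁ : y₁ ∈ K.erase g) (h₂ : y₂ ∈ K.erase g) (h₃ : y₃ ∈ K.erase g) :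
    Reach (K.erase g) y₁ y₂ ∨ Reach (K.erase g) y₁ y₃ ∨ Reach (K.erase g) y₂ y₃ := by
  have get : ∀ y, y ∈ K.erase g → ∃ a, a ∈ K.erase g ∧ Adj2 g a ∧ Reach (K.erase g) a y := by
    intro y hy
    obtain ⟨hyne, hyK⟩ := Finset.mem_erase.1 hy
    rcases escape (hK g hg y hyK) hyne with hr | h
    · exact absurd (reach_eq_of_not_mem hr (Finset.notMem_erase _ _)) (Ne.symm hyne)
    · exact h
  obtain ⟨a₁, ha₁, ⟨x₁, hx₁g, hx₁a⟩, hr₁⟩ := get _ h₁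
  obtain ⟨a₂, ha₂, ⟨x₂, hx₂g, hx₂a⟩, hr₂⟩ := get _ h₂
  obtain ⟨a₃, ha₃, ⟨x₃, hx₃g, hx₃a⟩, hr₃⟩ := get _ h₃
  have link : ∀ (a b ya yb : Sym2 V) (x : V), x ∈ a → x ∈ b → a ∈ K.erase g → b ∈ K.erase g →
      Reach (K.erase g) a ya → Reach (K.erase g) b yb → Reach (K.erase g) ya yb :=
    fun a b ya yb x hxa hxb haK hbK hra hrb =>
      reach_trans (reach_symm hra)
        (reach_trans (Relation.ReflTransGen.single ⟨haK, hbK, x, hxa, hxb⟩) hrb)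
  have hguv : ∃ u v : V, g = s(u, v) := by
    induction g using Sym2.ind with
    | _ u v => exact ⟨u, v, rfl⟩
  obtain ⟨u, v, huv⟩ := hguv
  rw [huv, Sym2.mem_iff] at hx₁g hx₂g hx₃g
  rcases hx₁g with rfl | rfl <;> rcases hx₂g with rfl | rfl <;> rcases hx₃g with rfl | rfl <;>
    first
      | exact Or.inl (link a₁ a₂ y₁ y₂ _ hx₁a hx₂a ha₁ ha₂ hr₁ hr₂)
      | exact Or.inr (Or.inl (link a₁ a₃ y₁ y₃ _ hx₁a hx₃a ha₁ ha₃ hr₁ hr₃))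
      | exact Or.inr (Or.inr (link a₂ a₃ y₂ y₃ _ hx₂a hx₃a ha₂ ha₃ hr₂ hr₃))

/-- If `y` is not in `z`'s component (after erasing one edge of a connected set),
its component is the complement. -/
theorem comp_compl {K : Finset (Sym2 V)} (hK : Conn K) {g : Sym2 V} (hg : g ∈ K) {z y : Sym2 V}
    (hz : z ∈ K.erase g) (hy : y ∈ K.erase g) (hnr : ¬ Reach (K.erase g) z y) :
    comp (K.erase g) y = K.erase g \ comp (K.erase g) z := by
  ext w
  simp only [mem_comp, Finset.mem_sdiff]
  constructor
  · rintro ⟨hw, hr⟩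
    refine ⟨hw, fun hwz => hnr ?_⟩
    exact reach_trans hwz.2 (reach_symm hr)
  · rintro ⟨hw, hwz⟩
    rcases reach_two hK hg hz hy hw with h | h | h
    · exact absurd h hnr
    · exact absurd ⟨hw, h⟩ hwz
    · exact ⟨hw, h⟩

/-- A set closed under components, all of whose components are even, has even cardinality. -/
theorem even_closed {C : Finset (Sym2 V)} : ∀ U : Finset (Sym2 V), U ⊆ C →
    (∀ y ∈ U, comp C y ⊆ U) → (∀ y ∈ U, Even (comp C y).card) → Even U.card := by
  intro U
  induction U using Finset.strongInduction with
  | _ U ih =>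
    intro hUC hcl hev
    rcases U.eq_empty_or_nonempty with rfl | ⟨y, hy⟩
    · simp
    · have hyC := hUC hy
      have hsub : comp C y ⊆ U := hcl y hy
      have hlt : U \ comp C y ⊂ U :=
        Finset.sdiff_ssubset hsub ⟨y, mem_comp_self hyC⟩
      have h1 : Even (U \ comp C y).card := by
        refine ih _ hlt (fun w hw => hUC (Finset.mem_sdiff.1 hw).1) ?_ ?_
        · intro w hw v hv
          obtain ⟨hwU, hwny⟩ := Finset.mem_sdiff.1 hw
          refine Finset.mem_sdiff.2 ⟨hcl w hwU hv, fun hvy => hwny ?_⟩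
          have h2 : Reach C y v := (mem_comp.1 hvy).2
          have h3 : Reach C w v := (mem_comp.1 hv).2
          exact mem_comp.2 ⟨hUC hwU, reach_trans h2 (reach_symm h3)⟩
        · intro w hw
          exact hev w (Finset.mem_sdiff.1 hw).1
      have hUeq : (U \ comp C y).card + (comp C y).card = U.card :=
        Finset.card_sdiff_add_card_eq_card hsub
      rw [← hUeq]
      exact h1.add (hev y hy)
def Good (C : Finset (Sym2 V)) : Prop :=
  ∃ P : Finset (Finset (Sym2 V)),
    (∀ p ∈ P, p.card = 2 ∧ p ⊆ C ∧ ∃ v, ∀ e ∈ p, v ∈ e) ∧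
    (∀ p ∈ P, ∀ q ∈ P, p ≠ q → Disjoint p q) ∧ P.biUnion id = C

theorem good_empty : Good (∅ : Finset (Sym2 V)) := ⟨∅, by simp, by simp, by simp⟩

theorem good_insert_pair {C : Finset (Sym2 V)} {g f : Sym2 V} (hC : Good C) (hg : g ∉ C)
    (hf : f ∉ C) (hgf : g ≠ f) (hadj : Adj2 g f) : Good (insert g (insert f C)) := by
  obtain ⟨P, h1, h2, h3⟩ := hC
  have hsub : C ⊆ insert g (insert f C) := fun x hx => by simp [hx]
  refine ⟨insert {g, f} P, ?_, ?_, ?_⟩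
  · intro p hp
    rcases Finset.mem_insert.1 hp with rfl | hp
    · obtain ⟨v, hvg, hvf⟩ := hadj
      refine ⟨Finset.card_pair hgf, ?_, v, ?_⟩
      · intro e he
        rcases Finset.mem_insert.1 he with rfl | he
        · exact Finset.mem_insert_self _ _
        · rw [Finset.mem_singleton.1 he]
          exact Finset.mem_insert.2 (Or.inr (Finset.mem_insert_self _ _))
      · intro e he
        rcases Finset.mem_insert.1 he with rfl | he
        · exact hvg
        · rw [Finset.mem_singleton.1 he]; exact hvf
    · obtain ⟨hc2, hcs, hvv⟩ := h1 p hp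
      exact ⟨hc2, hcs.trans hsub, hvv⟩
  · have hdisj : ∀ q ∈ P, Disjoint ({g, f} : Finset (Sym2 V)) q := by
      intro q hq
      rw [Finset.disjoint_left]
      intro x hx hxq
      have hxC : x ∈ C := (h1 q hq).2.1 hxq
      rcases Finset.mem_insert.1 hx with rfl | hx
      · exact hg hxC
      · rw [Finset.mem_singleton.1 hx] at hxC; exact hf hxC
    intro p hp q hq hne
    rcases Finset.mem_insert.1 hp with rfl | hp <;> rcases Finset.mem_insert.1 hq with rfl | hq
    · exact absurd rfl hne
    · exact hdisj q hq
    · exact (hdisj p hp).symm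
    · exact h2 p hp q hq hne
  · rw [Finset.biUnion_insert, h3]
    ext x
    simp [or_assoc]

theorem good_star : ∀ D : Finset (Sym2 V), (∃ v, ∀ e ∈ D, v ∈ e) → Even D.card → Good D := by
  intro D
  induction D using Finset.strongInduction with
  | _ D ih =>
    rintro ⟨v, hv⟩ heven
    rcases D.eq_empty_or_nonempty with rfl | ⟨g, hg⟩
    · exact good_empty
    have h2 : 2 ≤ D.card := by
      obtain ⟨k, hk⟩ := heven
      have : D.card ≠ 0 := Finset.card_ne_zero_of_mem hg
      omega
    have hfne : (D.erase g).Nonempty := by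
      rw [← Finset.card_pos, Finset.card_erase_of_mem hg]
      omega
    obtain ⟨f, hf⟩ := hfne
    obtain ⟨hfg, hfD⟩ := Finset.mem_erase.1 hf
    have hfD' : f ∈ D.erase g := hf
    have hD'ss : (D.erase g).erase f ⊂ D :=
      ((Finset.erase_subset _ _).trans_ssubset (Finset.erase_ssubset hg))
    have hcard : ((D.erase g).erase f).card = D.card - 2 := by
      rw [Finset.card_erase_of_mem hfD', Finset.card_erase_of_mem hg]
      omega
    have good' : Good ((D.erase g).erase f) := by
      refine ih _ hD'ss ⟨v, fun e he => hv e ?_⟩ ?_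
      · exact Finset.mem_of_mem_erase (Finset.mem_of_mem_erase he)
      · rw [hcard]
        obtain ⟨k, hk⟩ := heven
        exact ⟨k - 1, by omega⟩
    have hgood := good_insert_pair good'
      (by simp) (by simp [hfg]) (Ne.symm hfg) ⟨v, hv g hg, hv f hfD⟩
    rwa [Finset.insert_erase hfD', Finset.insert_erase hg] at hgood
theorem sym2_eq_of_ne {p x y : V} {e : Sym2 V} (hp : p ∈ e) (hx : x ∈ e) (hy : y ∈ e)
    (hxp : x ≠ p) (hyp : y ≠ p) : x = y := by
  induction e using Sym2.ind with
  | _ u v =>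
    rw [Sym2.mem_iff] at hp hx hy
    rcases hp with rfl | rfl <;> rcases hx with rfl | rfl <;> rcases hy with rfl | rfl <;> tauto

theorem claim : ∀ (n : ℕ) (K : Finset (Sym2 V)), K.card = n → Conn K → Odd K.card →
    ∀ (p : V) (f₁ : Sym2 V), f₁ ∈ K → p ∈ f₁ →
    ∃ f ∈ K, p ∈ f ∧ ∀ y ∈ K.erase f, Even (comp (K.erase f) y).card := by
  intro n
  induction n using Nat.strong_induction_on with
  | _ n ih =>
  intro K hcard hK hodd p f₁ hf₁ hp
  set C₁ := K.erase f₁ with hC₁def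
  have hC₁even : Even C₁.card := by
    rw [hC₁def, Finset.card_erase_of_mem hf₁]
    exact Nat.Odd.sub_odd hodd odd_one
  by_cases hAE : ∀ y ∈ C₁, Even (comp C₁ y).card
  · exact ⟨f₁, hf₁, hp, hAE⟩
  push_neg at hAE
  obtain ⟨y₀, hy₀, hy₀odd⟩ := hAE
  have get : ∀ y, y ∈ C₁ → ∃ a, a ∈ C₁ ∧ Adj2 f₁ a ∧ Reach C₁ a y := by
    intro y hy
    obtain ⟨hyne, hyK⟩ := Finset.mem_erase.1 hy
    rcases escape (hK f₁ hf₁ y hyK) hyne with hr | h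
    · exact absurd (reach_eq_of_not_mem hr (Finset.notMem_erase _ _)) (Ne.symm hyne)
    · exact h
  -- there is another edge at p
  have hep : ∃ e_p, e_p ∈ C₁ ∧ p ∈ e_p := by
    by_contra hno
    push_neg at hno
    have hcy₀ : comp C₁ y₀ = C₁ := by
      have hall : ∀ y ∈ C₁, Reach C₁ y₀ y := by
        intro y hy
        obtain ⟨a, haC₁, ⟨x, hxf₁, hxa⟩, hra⟩ := get y hy
        obtain ⟨a₀, ha₀C₁, ⟨x₀, hx₀f₁, hx₀a₀⟩, hra₀⟩ := get y₀ hy₀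
        have hxny : x ≠ p := fun h => hno a haC₁ (h ▸ hxa)
        have hx₀ny : x₀ ≠ p := fun h => hno a₀ ha₀C₁ (h ▸ hx₀a₀)
        have hxx₀ : x = x₀ := sym2_eq_of_ne hp hxf₁ hx₀f₁ hxny hx₀ny
        exact reach_trans (reach_symm hra₀)
          (reach_trans (Relation.ReflTransGen.single ⟨ha₀C₁, haC₁, x₀, hx₀a₀, hxx₀ ▸ hxa⟩) hra)
      ext w
      simp only [mem_comp]
      exact ⟨fun h => h.1, fun h => ⟨h, hall w h⟩⟩
    rw [hcy₀] at hy₀odd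
    exact hy₀odd hC₁even
  obtain ⟨e_p, hepC₁, hpep⟩ := hep
  set B := comp C₁ e_p with hBdef
  have hBsub : B ⊆ C₁ := comp_subset _
  have hconnB : Conn B := conn_comp hepC₁
  have hBodd : Odd B.card := by
    rcases Nat.even_or_odd B.card with hBe | hBo
    · exfalso
      have hy₀nB : ¬ Reach C₁ e_p y₀ := by
        intro hr
        apply hy₀odd
        have : comp C₁ e_p = comp C₁ y₀ := comp_eq_of_mem (mem_comp.2 ⟨hy₀, hr⟩)
        rw [← this]
        exact hBe
      have hcompl := comp_compl hK hf₁ hepC₁ hy₀ hy₀nB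
      apply hy₀odd
      rw [hcompl, Finset.card_sdiff_of_subset (comp_subset _)]
      exact (Nat.even_sub (Finset.card_le_card hBsub)).2 (iff_of_true hC₁even hBe)
    · exact hBo
  have hBcard_lt : B.card < n := by
    have h1 : B.card ≤ C₁.card := Finset.card_le_card hBsub
    have h2 : C₁.card = K.card - 1 := by rw [hC₁def, Finset.card_erase_of_mem hf₁]
    have h3 : 1 ≤ K.card := Finset.card_pos.2 ⟨f₁, hf₁⟩
    omega
  obtain ⟨f, hfB, hpf, hZ⟩ :=
    ih B.card hBcard_lt B rfl hconnB hBodd p e_p (mem_comp_self hepC₁) hpep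
  have hfC₁ : f ∈ C₁ := hBsub hfB
  have hff₁ : f ≠ f₁ := (Finset.mem_erase.1 hfC₁).1
  have hfK : f ∈ K := Finset.mem_of_mem_erase hfC₁
  refine ⟨f, hfK, hpf, ?_⟩
  set Cf := K.erase f with hCfdef
  have hf₁Cf : f₁ ∈ Cf := Finset.mem_erase.2 ⟨Ne.symm hff₁, hf₁⟩
  have hBfCf : B.erase f ⊆ Cf := by
    intro w hw
    obtain ⟨hwf, hwB⟩ := Finset.mem_erase.1 hw
    exact Finset.mem_erase.2 ⟨hwf, Finset.mem_of_mem_erase (hBsub hwB)⟩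
  -- Sublemma: components avoiding f₁ are components of B.erase f
  have subA : ∀ y ∈ Cf, f₁ ∉ comp Cf y → y ∈ B.erase f ∧ comp Cf y = comp (B.erase f) y := by
    intro y hyCf hnotf₁
    have hyK : y ∈ K := Finset.mem_of_mem_erase hyCf
    have hynf : y ≠ f := (Finset.mem_erase.1 hyCf).1
    have hynf₁ : y ≠ f₁ := by rintro rfl; exact hnotf₁ (mem_comp_self hyCf)
    have hyC₁ : y ∈ C₁ := Finset.mem_erase.2 ⟨hynf₁, hyK⟩
    have hyB : y ∈ B := by
      by_contra hyB
      have hfnotin : f ∉ comp C₁ y := by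
        intro hfin
        apply hyB
        have h1 : Reach C₁ y f := (mem_comp.1 hfin).2
        have h2 : Reach C₁ e_p f := (mem_comp.1 hfB).2
        exact mem_comp.2 ⟨hyC₁, reach_trans h2 (reach_symm h1)⟩
      rcases escape (hK f₁ hf₁ y hyK) hynf₁ with hr | ⟨a, haC₁, hadj, hra⟩
      · exact absurd (reach_eq_of_not_mem hr (Finset.notMem_erase _ _)).symm hynf₁
      · have haCy : a ∈ comp C₁ y := mem_comp.2 ⟨haC₁, reach_symm hra⟩
        have hfnotina : f ∉ comp C₁ a := by rw [← comp_eq_of_mem haCy]; exact hfnotin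
        have hr2 : Reach (C₁.erase f) a y := reach_erase haC₁ hfnotina hra
        have hsub2 : C₁.erase f ⊆ Cf := by
          intro w hw
          obtain ⟨hwf, hwC₁⟩ := Finset.mem_erase.1 hw
          exact Finset.mem_erase.2 ⟨hwf, Finset.mem_of_mem_erase hwC₁⟩
        have hanf : a ≠ f := by rintro rfl; exact hfnotin haCy
        have haCf : a ∈ Cf := Finset.mem_erase.2 ⟨hanf, Finset.mem_of_mem_erase haC₁⟩
        have hrCf : Reach Cf f₁ y :=
          Relation.ReflTransGen.head ⟨hf₁Cf, haCf, hadj⟩ (reach_mono hsub2 hr2)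
        exact hnotf₁ (mem_comp.2 ⟨hf₁Cf, reach_symm hrCf⟩)
    have hyBf : y ∈ B.erase f := Finset.mem_erase.2 ⟨hynf, hyB⟩
    have key : ∀ w, Reach Cf y w → Reach (B.erase f) y w := by
      intro w hw
      induction hw with
      | refl => exact .refl
      | @tail b c hr hstep ihh =>
          have hbBf : b ∈ B.erase f := reach_mem hyBf ihh
          have hcCf : c ∈ Cf := hstep.2.1
          have hcnf₁ : c ≠ f₁ := by
            rintro rfl
            exact hnotf₁ (mem_comp.2 ⟨hstep.2.1,
              Relation.ReflTransGen.tail (reach_mono hBfCf ihh) hstep⟩)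
          have hcC₁ : c ∈ C₁ := Finset.mem_erase.2 ⟨hcnf₁, Finset.mem_of_mem_erase hcCf⟩
          have hbB : b ∈ B := Finset.mem_of_mem_erase hbBf
          have hbC₁ : b ∈ C₁ := hBsub hbB
          have hcB : c ∈ B := by
            have hre : Reach C₁ e_p b := (mem_comp.1 hbB).2
            exact mem_comp.2 ⟨hcC₁, Relation.ReflTransGen.tail hre ⟨hbC₁, hcC₁, hstep.2.2⟩⟩
          have hcnf : c ≠ f := (Finset.mem_erase.1 hcCf).1
          exact Relation.ReflTransGen.tail ihh ⟨hbBf, Finset.mem_erase.2 ⟨hcnf, hcB⟩, hstep.2.2⟩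
    refine ⟨hyBf, ?_⟩
    ext w
    simp only [mem_comp]
    constructor
    · rintro ⟨hwCf, hr⟩
      have hkw := key w hr
      exact ⟨reach_mem hyBf hkw, hkw⟩
    · rintro ⟨hwBf, hr⟩
      exact ⟨hBfCf hwBf, reach_mono hBfCf hr⟩
  intro y hyCf
  by_cases hcase : f₁ ∈ comp Cf y
  · rw [comp_eq_of_mem hcase]
    have hU : Even (Cf \ comp Cf f₁).card := by
      refine even_closed (C := Cf) _ Finset.sdiff_subset ?_ ?_
      · intro w hw v' hv'
        obtain ⟨hwCf, hwn⟩ := Finset.mem_sdiff.1 hw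
        refine Finset.mem_sdiff.2 ⟨(mem_comp.1 hv').1, fun hv'f₁ => hwn ?_⟩
        exact mem_comp.2 ⟨hwCf, reach_trans (mem_comp.1 hv'f₁).2 (reach_symm (mem_comp.1 hv').2)⟩
      · intro w hw
        obtain ⟨hwCf, hwn⟩ := Finset.mem_sdiff.1 hw
        have hnf₁ : f₁ ∉ comp Cf w := by
          intro hin
          exact hwn (mem_comp.2 ⟨hwCf, reach_symm (mem_comp.1 hin).2⟩)
        obtain ⟨hwBf, heqw⟩ := subA w hwCf hnf₁
        rw [heqw]
        exact hZ w hwBf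
    have hCfeven : Even Cf.card := by
      rw [hCfdef, Finset.card_erase_of_mem hfK]
      exact Nat.Odd.sub_odd hodd odd_one
    have hsum : (Cf \ comp Cf f₁).card + (comp Cf f₁).card = Cf.card :=
      Finset.card_sdiff_add_card_eq_card (comp_subset _)
    exact (Nat.even_add.1 (hsum ▸ hCfeven)).1 hU
  · obtain ⟨hyBf, heqy⟩ := subA y hyCf hcase
    rw [heqy]
    exact hZ y hyBf
theorem main : ∀ (n : ℕ) (C : Finset (Sym2 V)), C.card = n →
    (∀ y ∈ C, Even (comp C y).card) → Good C := by
  intro n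
  induction n using Nat.strong_induction_on with
  | _ n ih =>
  intro C hcard hAE
  rcases C.eq_empty_or_nonempty with rfl | ⟨e₀, he₀⟩
  · exact good_empty
  set K := comp C e₀ with hKdef
  have hKsub : K ⊆ C := comp_subset _
  have hconnK : Conn K := conn_comp he₀
  have he₀K : e₀ ∈ K := mem_comp_self he₀
  have hKeven : Even K.card := hAE e₀ he₀
  set D₁ := K.erase e₀ with hD₁def
  have hK1 : 1 ≤ K.card := Finset.card_pos.2 ⟨e₀, he₀K⟩
  have hD₁odd : Odd D₁.card := by
    rw [hD₁def, Finset.card_erase_of_mem he₀K]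
    exact Nat.Even.sub_odd hK1 hKeven odd_one
  have hz : ∃ z ∈ D₁, ¬ Even (comp D₁ z).card := by
    by_contra hno
    push_neg at hno
    have : Even D₁.card :=
      even_closed (C := D₁) D₁ (fun x h => h) (fun y _ => comp_subset _) hno
    exact ((Nat.not_even_iff_odd.2 hD₁odd)) this
  obtain ⟨z, hzD₁, hzodd⟩ := hz
  set Z := comp D₁ z with hZdef
  have hZodd : Odd Z.card := Nat.not_even_iff_odd.1 hzodd
  have hZsub : Z ⊆ D₁ := comp_subset _
  have hzK : z ∈ K := Finset.mem_of_mem_erase hzD₁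
  have hzne : z ≠ e₀ := (Finset.mem_erase.1 hzD₁).1
  have hesc : ∃ a, a ∈ D₁ ∧ Adj2 e₀ a ∧ Reach D₁ a z := by
    rcases escape (hconnK e₀ he₀K z hzK) hzne with hr | h
    · exact absurd (reach_eq_of_not_mem hr (Finset.notMem_erase _ _)) (Ne.symm hzne)
    · exact h
  obtain ⟨a, haD₁, ⟨x, hxe₀, hxa⟩, hra⟩ := hesc
  have haZ : a ∈ Z := mem_comp.2 ⟨haD₁, reach_symm hra⟩
  obtain ⟨f, hfZ, hxf, hAEZ⟩ := claim Z.card Z rfl (conn_comp hzD₁) hZodd x a haZ hxa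
  have hfD₁ : f ∈ D₁ := hZsub hfZ
  have hfK : f ∈ K := Finset.mem_of_mem_erase hfD₁
  have hfne₀ : f ≠ e₀ := (Finset.mem_erase.1 hfD₁).1
  have hfC : f ∈ C := hKsub hfK
  set C' := (C.erase e₀).erase f with hC'def
  have hC'sub : C' ⊆ C :=
    fun w hw => Finset.mem_of_mem_erase (Finset.mem_of_mem_erase hw)
  have hfCe₀ : f ∈ C.erase e₀ := Finset.mem_erase.2 ⟨hfne₀, hfC⟩
  have hn2 : C'.card < n := by
    have h1 : C'.card = n - 2 := by
      rw [hC'def, Finset.card_erase_of_mem hfCe₀, Finset.card_erase_of_mem he₀, hcard]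
      omega
    have h2 : 1 ≤ n := by rw [← hcard]; exact Finset.card_pos.2 ⟨e₀, he₀⟩
    omega
  have hAE' : ∀ y ∈ C', Even (comp C' y).card := by
    intro y hyC'
    have hyC : y ∈ C := hC'sub hyC'
    have hynf : y ≠ f := (Finset.mem_erase.1 hyC').1
    have hyne₀ : y ≠ e₀ := (Finset.mem_erase.1 (Finset.mem_of_mem_erase hyC')).1
    by_cases hyK : y ∈ K
    · have hKC' : K ∩ C' = D₁.erase f := by
        ext w
        simp only [Finset.mem_inter, hC'def, hD₁def, Finset.mem_erase]
        constructor
        · rintro ⟨hwK, hwf, hwe₀, _⟩; exact ⟨hwf, hwe₀, hwK⟩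
        · rintro ⟨hwf, hwe₀, hwK⟩; exact ⟨hwK, hwf, hwe₀, hKsub hwK⟩
      have h1 : comp C' y = comp (D₁.erase f) y := by
        have hh := comp_inter_eq hC'sub (z := e₀) hyK hyC'
        rw [← hKdef, hKC'] at hh
        exact hh
      by_cases hyZ : y ∈ Z
      · have hyD₁f : y ∈ D₁.erase f :=
          Finset.mem_erase.2 ⟨hynf, Finset.mem_erase.2 ⟨hyne₀, hyK⟩⟩
        have h2 : comp (D₁.erase f) y = comp (Z ∩ D₁.erase f) y :=
          comp_inter_eq (Finset.erase_subset _ _) hyZ hyD₁f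
        have hZD : Z ∩ D₁.erase f = Z.erase f := by
          ext w
          simp only [Finset.mem_inter, Finset.mem_erase]
          constructor
          · rintro ⟨hwZ, hwf, _⟩; exact ⟨hwf, hwZ⟩
          · rintro ⟨hwf, hwZ⟩; exact ⟨hwZ, hwf, hZsub hwZ⟩
        rw [h1, h2, hZD]
        exact hAEZ y (Finset.mem_erase.2 ⟨hynf, hyZ⟩)
      · have hyD₁ : y ∈ D₁ := Finset.mem_erase.2 ⟨hyne₀, hyK⟩
        have hfny : f ∉ comp D₁ y := by
          intro hin
          apply hyZ
          exact mem_comp.2 ⟨hyD₁,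
            reach_trans (mem_comp.1 hfZ).2 (reach_symm (mem_comp.1 hin).2)⟩
        have h2 : comp (D₁.erase f) y = comp D₁ y := comp_erase_eq hyD₁ hfny
        have hnr : ¬ Reach D₁ z y := fun hr => hyZ (mem_comp.2 ⟨hyD₁, hr⟩)
        have h3 : comp D₁ y = D₁ \ Z := comp_compl hconnK he₀K hzD₁ hyD₁ hnr
        rw [h1, h2, h3, Finset.card_sdiff_of_subset hZsub]
        exact Nat.Odd.sub_odd hD₁odd hZodd
    · have hgny : e₀ ∉ comp C y := by
        intro hin
        exact hyK (mem_comp.2 ⟨hyC, reach_symm (mem_comp.1 hin).2⟩)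
      have h1 : comp (C.erase e₀) y = comp C y := comp_erase_eq hyC hgny
      have hfny : f ∉ comp (C.erase e₀) y := by
        rw [h1]
        intro hin
        apply hyK
        exact mem_comp.2 ⟨hyC,
          reach_trans (mem_comp.1 hfK).2 (reach_symm (mem_comp.1 hin).2)⟩
      have hyCe₀ : y ∈ C.erase e₀ := Finset.mem_erase.2 ⟨hyne₀, hyC⟩
      have h2 : comp C' y = comp (C.erase e₀) y := comp_erase_eq hyCe₀ hfny
      rw [h2, h1]
      exact hAE y hyC
  have hgood' : Good C' := ih C'.card hn2 C' rfl hAE'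
  have hge : e₀ ∉ C' :=
    fun h => Finset.notMem_erase e₀ C (Finset.mem_of_mem_erase h)
  have hfe : f ∉ C' := Finset.notMem_erase _ _
  have hfinal := good_insert_pair hgood' hge hfe (Ne.symm hfne₀) ⟨x, hxe₀, hxf⟩
  rwa [Finset.insert_erase hfCe₀, Finset.insert_erase he₀] at hfinal
end Kotzig

open SimpleGraph Finset

/-- Kotzig: every connected graph with an even number of edges admits a partition of
its edge set into pairs of adjacent edges (pairs sharing a common vertex). -/
theorem stmt0 {V : Type*} [Fintype V] [DecidableEq V] (G : SimpleGraph V)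
    [DecidableRel G.Adj] (hconn : G.Connected) (heven : Even G.edgeFinset.card) :
    ∃ P : Finset (Finset (Sym2 V)),
      (∀ p ∈ P, p.card = 2 ∧ p ⊆ G.edgeFinset ∧ ∃ v : V, ∀ e ∈ p, v ∈ e) ∧
      (∀ p ∈ P, ∀ q ∈ P, p ≠ q → Disjoint p q) ∧
      P.biUnion id = G.edgeFinset := by
  classical
  set C := G.edgeFinset with hC
  have walklem : ∀ {u w : V} (W : G.Walk u w), ∀ e f : Sym2 V, e ∈ C → f ∈ C →
      u ∈ e → w ∈ f → Kotzig.Reach C e f := by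
    intro u w W
    induction W with
    | nil =>
      intro e f he hf hue hwf
      exact Relation.ReflTransGen.single ⟨he, hf, _, hue, hwf⟩
    | @cons u' v' w' h p ihW =>
      intro e f he hf hue hwf
      have hedge : s(u', v') ∈ C := by
        rw [hC, SimpleGraph.mem_edgeFinset, SimpleGraph.mem_edgeSet]; exact h
      have step1 : Kotzig.Step C e s(u', v') := ⟨he, hedge, u', hue, by simp⟩
      exact Relation.ReflTransGen.head step1 (ihW s(u', v') f hedge hf (by simp) hwf)
  have hreach : Kotzig.Conn C := by
    intro e he f hf
    revert he hf
    induction e using Sym2.ind with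
    | _ a b =>
      induction f using Sym2.ind with
      | _ c d =>
        intro he hf
        obtain ⟨W⟩ := hconn.preconnected a c
        exact walklem W _ _ he hf (by simp) (by simp)
  have hAE : ∀ y ∈ C, Even (Kotzig.comp C y).card := by
    intro y hy
    rw [Kotzig.comp_eq_self_of_conn hreach hy]
    exact heven
  obtain ⟨P, h1, h2, h3⟩ := Kotzig.main C.card C rfl hAE
  exact ⟨P, h1, h2, h3⟩
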